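/- In the frame 𝔉 of the Chagrov encoding, under any valuation, the formula π₁ = (◇α^1_0 ∨ α^1_0) ∧ ¬◇α^0_0 ∧ ¬◇α^2_0 ∧ p₁ ∧ ¬◇p₁ is true at no more than one point of 𝔉, and if it is true at a point x then x = a^1_j for some j ≥ 0. -/

import Mathlib

inductive MF : Type where
  | var : Nat → MF
  | bot : MF
  | neg : MF → MF
  | and : MF → MF → MF
  | box : MF → MF

namespace MF
def top : MF := neg bot
def or (φ ψ : MF) : MF := neg (and (neg φ) (neg ψ))
def imp (φ ψ : MF) : MF := or (neg φ) ψ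
def dia (φ : MF) : MF := neg (box (neg φ))
def iff (φ ψ : MF) : MF := and (imp φ ψ) (imp ψ φ)
def subst (σ : Nat → MF) : MF → MF
  | .var n => σ n
  | .bot => .bot
  | .neg φ => .neg (subst σ φ)
  | .and φ ψ => .and (subst σ φ) (subst σ ψ)
  | .box φ => .box (subst σ φ)
end MF

/-- Truth at a point of a Kripke model. -/
def sat {W : Type} (R : W → W → Prop) (V : Nat → W → Prop) : W → MF → Prop
  | x, .var n => V n x
  | _, .bot => False
  | x, .neg φ => ¬ sat R V x φ
  | x, .and φ ψ => sat R V x φ ∧ sat R V x ψ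
  | x, .box φ => ∀ y, R x y → sat R V y φ
namespace MF
/- The variable-free Chagrov formulas. -/
def fα : MF := and (dia top) (box (dia top))
def fβ : MF := box bot
def fγ : MF := and (dia fα) (and (dia fβ) (neg (dia (dia fβ))))
def fδ : MF := and (neg fγ) (and (dia fβ) (neg (dia (dia fβ))))
def fδ₁ : MF := and (dia fδ) (neg (dia (dia fδ)))
def fδ₂ : MF := and (dia fδ₁) (neg (dia (dia fδ₁)))
def fγ₁ : MF := and (dia fγ) (and (neg (dia (dia fγ))) (neg (dia fδ)))
def fγ₂ : MF := and (dia fγ₁) (and (neg (dia (dia fγ₁))) (neg (dia fδ)))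
def α₀ : Nat → MF
  | 0 => and (dia fγ) (and (dia fδ) (and (neg (dia (dia fγ))) (neg (dia (dia fδ)))))
  | 1 => and (dia fγ₁) (and (dia fδ₁) (and (neg (dia (dia fγ₁))) (neg (dia (dia fδ₁)))))
  | 2 => and (dia fγ₂) (and (dia fδ₂) (and (neg (dia (dia fγ₂))) (neg (dia (dia fδ₂)))))
  | _ => bot
/-- ⋀_{k ≠ i, k ≤ 2} ¬◇α^k_0 -/
def others (i : Nat) : MF :=
  ((((List.range 3).filter (· ≠ i))).map (fun k => neg (dia (α₀ k)))).foldr MF.and MF.top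
/-- α^i_j, with α^i_{j+1} = ◇α^i_0 ∧ ◇α^i_j ∧ ¬◇◇α^i_j ∧ ⋀_{k≠i}¬◇α^k_0. -/
def alpha (i : Nat) : Nat → MF
  | 0 => α₀ i
  | (j+1) => and (dia (α₀ i)) (and (dia (alpha i j)) (and (neg (dia (dia (alpha i j)))) (others i)))
end MF
/-- Instructions of a Minsky (two-register) machine. -/
inductive Instr : Type where
  | inc1 (s t : Nat)            -- s → ⟨t,1,0⟩
  | inc2 (s t : Nat)            -- s → ⟨t,0,1⟩
  | dec1 (s t t' : Nat)         -- s → ⟨t,-1,0⟩(⟨t',0,0⟩)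
  | dec2 (s t t' : Nat)         -- s → ⟨t,0,-1⟩(⟨t',0,0⟩)
deriving DecidableEq

abbrev Config := Nat × Nat × Nat

def Instr.src : Instr → Nat
  | .inc1 s _ => s
  | .inc2 s _ => s
  | .dec1 s _ _ => s
  | .dec2 s _ _ => s

/-- One-step transformation of configurations by an instruction. -/
def Instr.Step : Instr → Config → Config → Prop
  | .inc1 s t, (s₁, m, n), c => s₁ = s ∧ c = (t, m+1, n)
  | .inc2 s t, (s₁, m, n), c => s₁ = s ∧ c = (t, m, n+1)
  | .dec1 s t t', (s₁, m, n), c =>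
      s₁ = s ∧ ((m ≠ 0 ∧ c = (t, m-1, n)) ∨ (m = 0 ∧ c = (t', 0, n)))
  | .dec2 s t t', (s₁, m, n), c =>
      s₁ = s ∧ ((n ≠ 0 ∧ c = (t, m, n-1)) ∨ (n = 0 ∧ c = (t', m, 0)))

/-- P : 𝔞 → 𝔟 : reachability in finitely many (possibly zero) steps. -/
def Reach (P : List Instr) : Config → Config → Prop :=
  Relation.ReflTransGen (fun c c' => ∃ I ∈ P, I.Step c c')

/-- At most one instruction with a given state on the left-hand side. -/
def Deterministic (P : List Instr) : Prop :=
  ∀ I ∈ P, ∀ J ∈ P, I.src = J.src → I = J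
/-- The points of the frame 𝔉 of Fig. 1. -/
inductive Pt : Type where
  | a | b | g | g1 | g2 | d | d1 | d2
  | chain (i j : Nat)          -- the point a^i_j
  | e (t k l : Nat)            -- the point e(t,k,l)
deriving DecidableEq

/-- Membership in the frame: e(t,k,l) exists only for reachable configurations. -/
def Pt.Ok (P : List Instr) (c₀ : Config) : Pt → Prop
  | .chain i _ => i ≤ 2
  | .e t k l => Reach P c₀ (t, k, l)
  | _ => True

/-- The base relation whose transitive closure is the accessibility relation of 𝔉. -/
def Pt.R0 : Pt → Pt → Prop
  | .a, .a => True
  | .g, .a => True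
  | .g, .b => True
  | .d, .b => True
  | .g1, .g => True
  | .g2, .g1 => True
  | .d1, .d => True
  | .d2, .d1 => True
  | .chain 0 0, .g => True
  | .chain 0 0, .d => True
  | .chain 1 0, .g1 => True
  | .chain 1 0, .d1 => True
  | .chain 2 0, .g2 => True
  | .chain 2 0, .d2 => True
  | .chain i (j+1), .chain i' j' => i = i' ∧ j = j'
  | .e t _ _, .chain 0 t' => t = t'
  | .e _ k _, .chain 1 k' => k = k'
  | .e _ _ l, .chain 2 l' => l = l'
  | _, _ => False

/-- The carrier of the frame 𝔉 built from P and 𝔞 = c₀. -/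
def FW (P : List Instr) (c₀ : Config) : Type := {p : Pt // Pt.Ok P c₀ p}

/-- The accessibility relation of 𝔉: the transitive closure of R0. -/
def FR (P : List Instr) (c₀ : Config) : FW P c₀ → FW P c₀ → Prop :=
  fun x y => Relation.TransGen Pt.R0 x.1 y.1

namespace MF
/-- π₁ = (◇α^1_0 ∨ α^1_0) ∧ ¬◇α^0_0 ∧ ¬◇α^2_0 ∧ p₁ ∧ ¬◇p₁ (p₁ = var 0). -/
def π₁ : MF :=
  and (or (dia (α₀ 1)) (α₀ 1)) (and (neg (dia (α₀ 0))) (and (neg (dia (α₀ 2)))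
    (and (var 0) (neg (dia (var 0))))))
end MF

section Aux
open Relation

/-- tails of successor sets -/
def tail0 (y : Pt) : Prop := y = .g ∨ y = .d ∨ y = .a ∨ y = .b
def tail1 (y : Pt) : Prop := y = .g1 ∨ y = .d1 ∨ tail0 y
def tail2 (y : Pt) : Prop := y = .g2 ∨ y = .d2 ∨ tail1 y
def ctail : Nat → Pt → Prop
  | 0, y => tail0 y
  | 1, y => tail1 y
  | 2, y => tail2 y
  | _, _ => False

/-- Explicit description of the transitive closure of R0. -/
def Rc : Pt → Pt → Prop
  | .a, y => y = .a
  | .b, _ => False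
  | .g, y => y = .a ∨ y = .b
  | .d, y => y = .b
  | .g1, y => y = .g ∨ y = .a ∨ y = .b
  | .g2, y => y = .g1 ∨ y = .g ∨ y = .a ∨ y = .b
  | .d1, y => y = .d ∨ y = .b
  | .d2, y => y = .d1 ∨ y = .d ∨ y = .b
  | .chain i j, y => (∃ j' < j, y = .chain i j') ∨ ctail i y
  | .e t k l, y => (∃ t' ≤ t, y = .chain 0 t') ∨ (∃ k' ≤ k, y = .chain 1 k') ∨
      (∃ l' ≤ l, y = .chain 2 l') ∨ tail2 y

lemma R0_sub : ∀ x y, Pt.R0 x y → Rc x y := by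
  intro x y h
  cases x with
  | a => cases y <;> simp_all [Pt.R0, Rc]
  | b => cases y <;> simp_all [Pt.R0, Rc]
  | g => cases y <;> simp_all [Pt.R0, Rc]
  | d => cases y <;> simp_all [Pt.R0, Rc]
  | g1 => cases y <;> simp_all [Pt.R0, Rc]
  | g2 => cases y <;> simp_all [Pt.R0, Rc]
  | d1 => cases y <;> simp_all [Pt.R0, Rc]
  | d2 => cases y <;> simp_all [Pt.R0, Rc]
  | chain i j =>
    match i, j, y with
    | 0, 0, y => cases y <;> simp_all [Pt.R0, Rc, ctail, tail0]
    | 1, 0, y => cases y <;> simp_all [Pt.R0, Rc, ctail, tail1, tail0]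
    | 2, 0, y => cases y <;> simp_all [Pt.R0, Rc, ctail, tail2, tail1, tail0]
    | (n+3), 0, y => cases y <;> simp_all [Pt.R0, Rc, ctail]
    | i, (j+1), y =>
      cases y <;> simp_all [Pt.R0, Rc]
  | e t k l => cases y with
    | chain i' j' =>
      match i' with
      | 0 => simp_all [Pt.R0, Rc]
      | 1 => simp_all [Pt.R0, Rc]
      | 2 => simp_all [Pt.R0, Rc]
      | (n+3) => simp_all [Pt.R0]
    | _ => simp_all [Pt.R0]

lemma tail01 : ∀ y, tail0 y → tail1 y := fun y h => Or.inr (Or.inr h)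
lemma tail12 : ∀ y, tail1 y → tail2 y := fun y h => Or.inr (Or.inr h)

lemma C0 : ∀ y z, tail0 y → Rc y z → tail0 z := by
  intro y z hy h
  rcases hy with rfl|rfl|rfl|rfl <;> simp_all [Rc, tail0] <;> tauto

lemma C1 : ∀ y z, tail1 y → Rc y z → tail1 z := by
  intro y z hy h
  rcases hy with rfl|rfl|h0
  · simp_all [Rc, tail1, tail0]; tauto
  · simp_all [Rc, tail1, tail0]; tauto
  · exact tail01 _ (C0 _ _ h0 h)

lemma C2 : ∀ y z, tail2 y → Rc y z → tail2 z := by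
  intro y z hy h
  rcases hy with rfl|rfl|h0
  · simp_all [Rc, tail2, tail1, tail0]; tauto
  · simp_all [Rc, tail2, tail1, tail0]; tauto
  · exact tail12 _ (C1 _ _ h0 h)

lemma Cc : ∀ i y z, ctail i y → Rc y z → ctail i z := by
  intro i y z hy h
  match i with
  | 0 => exact C0 _ _ hy h
  | 1 => exact C1 _ _ hy h
  | 2 => exact C2 _ _ hy h
  | (n+3) => exact absurd hy (by simp [ctail])

lemma Rc_trans : ∀ x y z, Rc x y → Rc y z → Rc x z := by
  intro x y z hxy hyz
  cases x with
  | a => simp_all [Rc]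
  | b => simp_all [Rc]
  | g =>
    rcases hxy with rfl|rfl <;> simp_all [Rc]
  | d => rcases hxy with rfl <;> simp_all [Rc]
  | g1 =>
    rcases hxy with rfl|rfl|rfl <;> simp_all [Rc] <;> tauto
  | g2 =>
    rcases hxy with rfl|rfl|rfl|rfl <;> simp_all [Rc] <;> tauto
  | d1 =>
    rcases hxy with rfl|rfl <;> simp_all [Rc] <;> tauto
  | d2 =>
    rcases hxy with rfl|rfl|rfl <;> simp_all [Rc] <;> tauto
  | chain i j =>
    rcases hxy with ⟨j', hj', rfl⟩ | hy
    · rcases hyz with ⟨j'', hj'', rfl⟩ | hz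
      · exact Or.inl ⟨j'', by omega, rfl⟩
      · exact Or.inr hz
    · exact Or.inr (Cc _ _ _ hy hyz)
  | e t k l =>
    rcases hxy with ⟨t', ht', rfl⟩ | ⟨k', hk', rfl⟩ | ⟨l', hl', rfl⟩ | hy
    · rcases hyz with ⟨t'', ht'', rfl⟩ | hz
      · exact Or.inl ⟨t'', by omega, rfl⟩
      · exact Or.inr (Or.inr (Or.inr (tail12 _ (tail01 _ hz))))
    · rcases hyz with ⟨k'', hk'', rfl⟩ | hz
      · exact Or.inr (Or.inl ⟨k'', by omega, rfl⟩)
      · exact Or.inr (Or.inr (Or.inr (tail12 _ hz)))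
    · rcases hyz with ⟨l'', hl'', rfl⟩ | hz
      · exact Or.inr (Or.inr (Or.inl ⟨l'', by omega, rfl⟩))
      · exact Or.inr (Or.inr (Or.inr hz))
    · exact Or.inr (Or.inr (Or.inr (C2 _ _ hy hyz)))

open Relation in
lemma tg_R0 {x y : Pt} (h : Pt.R0 x y) : Relation.TransGen Pt.R0 x y := TransGen.single h

lemma tg_chain0 : ∀ (i j : Nat) (z : Pt), Pt.R0 (.chain i 0) z →
    Relation.TransGen Pt.R0 (.chain i j) z := by
  intro i j
  induction j with
  | zero => exact fun z h => Relation.TransGen.single h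
  | succ j ih =>
      intro z h
      exact Relation.TransGen.head (by simp [Pt.R0]) (ih z h)

lemma tg_chain_desc : ∀ (i j j' : Nat), j' < j →
    Relation.TransGen Pt.R0 (.chain i j) (.chain i j') := by
  intro i j
  induction j with
  | zero => omega
  | succ j ih =>
      intro j' h
      rcases Nat.lt_or_ge j' j with h'|h'
      · exact Relation.TransGen.head (by simp [Pt.R0]) (ih j' h')
      · have : j' = j := by omega
        subst this; exact Relation.TransGen.single (by simp [Pt.R0])

lemma tg_of_rc : ∀ x y, Rc x y → Relation.TransGen Pt.R0 x y := by
  have ta : Relation.TransGen Pt.R0 .a .a := tg_R0 (by simp [Pt.R0])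
  have tga : Relation.TransGen Pt.R0 .g .a := tg_R0 (by simp [Pt.R0])
  have tgb : Relation.TransGen Pt.R0 .g .b := tg_R0 (by simp [Pt.R0])
  have tdb : Relation.TransGen Pt.R0 .d .b := tg_R0 (by simp [Pt.R0])
  have tg1 : Relation.TransGen Pt.R0 .g1 .g := tg_R0 (by simp [Pt.R0])
  have tg2 : Relation.TransGen Pt.R0 .g2 .g1 := tg_R0 (by simp [Pt.R0])
  have td1 : Relation.TransGen Pt.R0 .d1 .d := tg_R0 (by simp [Pt.R0])
  have td2 : Relation.TransGen Pt.R0 .d2 .d1 := tg_R0 (by simp [Pt.R0])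
  -- tail0 from g/d endpoints packaged: for any x with TG x g and TG x d, tail0 targets reachable
  have t0 : ∀ (x : Pt), Relation.TransGen Pt.R0 x .g → Relation.TransGen Pt.R0 x .d →
      ∀ z, tail0 z → Relation.TransGen Pt.R0 x z := by
    intro x hg hd z hz
    rcases hz with rfl|rfl|rfl|rfl
    · exact hg
    · exact hd
    · exact hg.trans tga
    · exact hd.trans tdb
  have t1 : ∀ (x : Pt), Relation.TransGen Pt.R0 x .g1 → Relation.TransGen Pt.R0 x .d1 →
      ∀ z, tail1 z → Relation.TransGen Pt.R0 x z := by
    intro x hg hd z hz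
    rcases hz with rfl|rfl|h0
    · exact hg
    · exact hd
    · exact t0 x (hg.trans tg1) (hd.trans td1) z h0
  have t2 : ∀ (x : Pt), Relation.TransGen Pt.R0 x .g2 → Relation.TransGen Pt.R0 x .d2 →
      ∀ z, tail2 z → Relation.TransGen Pt.R0 x z := by
    intro x hg hd z hz
    rcases hz with rfl|rfl|h0
    · exact hg
    · exact hd
    · exact t1 x (hg.trans tg2) (hd.trans td2) z h0
  have tc0g : ∀ j, Relation.TransGen Pt.R0 (.chain 0 j) .g := fun j => tg_chain0 0 j _ (by simp [Pt.R0])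
  have tc0d : ∀ j, Relation.TransGen Pt.R0 (.chain 0 j) .d := fun j => tg_chain0 0 j _ (by simp [Pt.R0])
  have tc1g : ∀ j, Relation.TransGen Pt.R0 (.chain 1 j) .g1 := fun j => tg_chain0 1 j _ (by simp [Pt.R0])
  have tc1d : ∀ j, Relation.TransGen Pt.R0 (.chain 1 j) .d1 := fun j => tg_chain0 1 j _ (by simp [Pt.R0])
  have tc2g : ∀ j, Relation.TransGen Pt.R0 (.chain 2 j) .g2 := fun j => tg_chain0 2 j _ (by simp [Pt.R0])
  have tc2d : ∀ j, Relation.TransGen Pt.R0 (.chain 2 j) .d2 := fun j => tg_chain0 2 j _ (by simp [Pt.R0])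
  have techain : ∀ (t k l : Nat) (i m m' : Nat), m' ≤ m →
      ((i = 0 ∧ m = t) ∨ (i = 1 ∧ m = k) ∨ (i = 2 ∧ m = l)) →
      Relation.TransGen Pt.R0 (.e t k l) (.chain i m') := by
    intro t k l i m m' hm hi
    have step : Pt.R0 (.e t k l) (.chain i m) := by
      rcases hi with ⟨rfl, rfl⟩|⟨rfl, rfl⟩|⟨rfl, rfl⟩ <;> simp [Pt.R0]
    rcases Nat.lt_or_ge m' m with h'|h'
    · exact (Relation.TransGen.single step).trans (tg_chain_desc i m m' h')
    · have : m' = m := by omega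
      subst this; exact Relation.TransGen.single step
  intro x y h
  cases x with
  | a => rw [Rc] at h; subst h; exact ta
  | b => exact absurd h (by simp [Rc])
  | g =>
    rcases h with rfl|rfl
    · exact tga
    · exact tgb
  | d => rw [Rc] at h; subst h; exact tdb
  | g1 =>
    rcases h with rfl|rfl|rfl
    · exact tg1
    · exact tg1.trans tga
    · exact tg1.trans tgb
  | g2 =>
    rcases h with rfl|rfl|rfl|rfl
    · exact tg2
    · exact tg2.trans tg1
    · exact (tg2.trans tg1).trans tga
    · exact (tg2.trans tg1).trans tgb
  | d1 =>
    rcases h with rfl|rfl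
    · exact td1
    · exact td1.trans tdb
  | d2 =>
    rcases h with rfl|rfl|rfl
    · exact td2
    · exact td2.trans td1
    · exact (td2.trans td1).trans tdb
  | chain i j =>
    rcases h with ⟨j', hj', rfl⟩ | hy
    · exact tg_chain_desc i j j' hj'
    · match i with
      | 0 => exact t0 _ (tc0g j) (tc0d j) _ hy
      | 1 => exact t1 _ (tc1g j) (tc1d j) _ hy
      | 2 => exact t2 _ (tc2g j) (tc2d j) _ hy
      | (n+3) => exact absurd hy (by simp [ctail])
  | e t k l =>
    have heg2 : Relation.TransGen Pt.R0 (.e t k l) .g2 :=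
      (techain t k l 2 l 0 (by omega) (by tauto)).trans (tc2g 0)
    have hed2 : Relation.TransGen Pt.R0 (.e t k l) .d2 :=
      (techain t k l 2 l 0 (by omega) (by tauto)).trans (tc2d 0)
    rcases h with ⟨t', ht', rfl⟩ | ⟨k', hk', rfl⟩ | ⟨l', hl', rfl⟩ | hy
    · exact techain t k l 0 t t' ht' (by tauto)
    · exact techain t k l 1 k k' hk' (by tauto)
    · exact techain t k l 2 l l' hl' (by tauto)
    · exact t2 _ heg2 hed2 _ hy

lemma tg_iff : ∀ x y, Relation.TransGen Pt.R0 x y ↔ Rc x y := by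
  intro x y
  constructor
  · intro h
    induction h with
    | single h => exact R0_sub _ _ h
    | tail _ h2 ih => exact Rc_trans _ _ _ ih (R0_sub _ _ h2)
  · exact tg_of_rc x y

section Model
variable (P : List Instr) (c₀ : Config) (V : Nat → FW P c₀ → Prop)

lemma ok_named : ∀ q, (q = Pt.a ∨ q = Pt.b ∨ q = Pt.g ∨ q = Pt.d ∨ q = Pt.g1 ∨ q = Pt.g2 ∨
    q = Pt.d1 ∨ q = Pt.d2) → Pt.Ok P c₀ q := by
  intro q h; rcases h with rfl|rfl|rfl|rfl|rfl|rfl|rfl|rfl <;> simp [Pt.Ok]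

lemma ok_chain (i j : Nat) (h : i ≤ 2) : Pt.Ok P c₀ (.chain i j) := h

lemma sat_dia_iff (x : FW P c₀) (φ : MF) :
    sat (FR P c₀) V x (MF.dia φ) ↔ ∃ y : FW P c₀, Rc x.1 y.1 ∧ sat (FR P c₀) V y φ := by
  unfold MF.dia
  simp only [sat]
  push_neg
  simp only [FR, tg_iff]

lemma sat_fβ_iff (x : FW P c₀) : sat (FR P c₀) V x MF.fβ ↔ x.1 = Pt.b := by
  unfold MF.fβ
  simp only [sat]
  constructor
  · intro h
    by_contra hb
    rcases hx : x.1 with _|_|_|_|_|_|_|_|⟨i, j⟩|⟨t, k, l⟩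
    · exact h ⟨.a, ok_named P c₀ _ (by tauto)⟩ (by show Relation.TransGen Pt.R0 _ _; rw [tg_iff, hx]; simp [Rc])
    · exact hb hx
    · exact h ⟨.a, ok_named P c₀ _ (by tauto)⟩ (by show Relation.TransGen Pt.R0 _ _; rw [tg_iff, hx]; simp [Rc])
    · exact h ⟨.g, ok_named P c₀ _ (by tauto)⟩ (by show Relation.TransGen Pt.R0 _ _; rw [tg_iff, hx]; simp [Rc])
    · exact h ⟨.g1, ok_named P c₀ _ (by tauto)⟩ (by show Relation.TransGen Pt.R0 _ _; rw [tg_iff, hx]; simp [Rc])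
    · exact h ⟨.b, ok_named P c₀ _ (by tauto)⟩ (by show Relation.TransGen Pt.R0 _ _; rw [tg_iff, hx]; simp [Rc])
    · exact h ⟨.d, ok_named P c₀ _ (by tauto)⟩ (by show Relation.TransGen Pt.R0 _ _; rw [tg_iff, hx]; simp [Rc])
    · exact h ⟨.d1, ok_named P c₀ _ (by tauto)⟩ (by show Relation.TransGen Pt.R0 _ _; rw [tg_iff, hx]; simp [Rc])
    · -- chain i j, i ≤ 2 from Ok
      have hok : i ≤ 2 := by have := x.2; rw [hx] at this; exact this
      refine h ⟨.a, ok_named P c₀ _ (by tauto)⟩ ?_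
      show Relation.TransGen Pt.R0 _ _; rw [tg_iff, hx]
      refine Or.inr ?_
      interval_cases i <;> simp [ctail, tail0, tail1, tail2]
    · exact h ⟨.a, ok_named P c₀ _ (by tauto)⟩
        (by show Relation.TransGen Pt.R0 _ _; rw [tg_iff, hx]; exact Or.inr (Or.inr (Or.inr (by simp [tail2, tail1, tail0]))))
  · intro h y hy
    rw [FR, tg_iff, h] at hy
    simp [Rc] at hy


lemma rc_chain_tail (i j : Nat) (hi : i ≤ 2) (z : Pt) (hz : tail0 z) : Rc (.chain i j) z := by
  refine Or.inr ?_
  interval_cases i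
  · exact hz
  · exact tail01 _ hz
  · exact tail12 _ (tail01 _ hz)

lemma twostepb : ∀ p, Pt.Ok P c₀ p → Rc p Pt.b → p ≠ .g → p ≠ .d →
    ∃ q, Pt.Ok P c₀ q ∧ Rc p q ∧ Rc q Pt.b := by
  intro p hok h hg hd
  cases p with
  | a => simp [Rc] at h
  | b => simp [Rc] at h
  | g => exact absurd rfl hg
  | d => exact absurd rfl hd
  | g1 => exact ⟨.g, ok_named P c₀ _ (by tauto), by simp [Rc], by simp [Rc]⟩
  | g2 => exact ⟨.g, ok_named P c₀ _ (by tauto), by simp [Rc], by simp [Rc]⟩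
  | d1 => exact ⟨.d, ok_named P c₀ _ (by tauto), by simp [Rc], by simp [Rc]⟩
  | d2 => exact ⟨.d, ok_named P c₀ _ (by tauto), by simp [Rc], by simp [Rc]⟩
  | chain i j =>
    exact ⟨.g, ok_named P c₀ _ (by tauto),
      rc_chain_tail i j hok _ (by simp [tail0]), by simp [Rc]⟩
  | e t k l =>
    exact ⟨.g, ok_named P c₀ _ (by tauto),
      Or.inr (Or.inr (Or.inr (by simp [tail2, tail1, tail0]))), by simp [Rc]⟩

lemma seesg_cases : ∀ p, Pt.Ok P c₀ p → Rc p Pt.g → p ≠ .g1 →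
    (∃ q, Pt.Ok P c₀ q ∧ Rc p q ∧ Rc q Pt.g) ∨ Rc p Pt.d := by
  intro p hok h hg1
  cases p with
  | a => simp [Rc] at h
  | b => simp [Rc] at h
  | g => simp [Rc] at h
  | d => simp [Rc] at h
  | g1 => exact absurd rfl hg1
  | g2 => exact Or.inl ⟨.g1, ok_named P c₀ _ (by tauto), by simp [Rc], by simp [Rc]⟩
  | d1 => simp [Rc, tail0] at h
  | d2 => simp [Rc, tail0] at h
  | chain i j => exact Or.inr (rc_chain_tail i j hok _ (by simp [tail0]))
  | e t k l => exact Or.inr (Or.inr (Or.inr (Or.inr (by simp [tail2, tail1, tail0]))))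

lemma seesd_cases : ∀ p, Pt.Ok P c₀ p → Rc p Pt.d → p ≠ .d1 → p ≠ .chain 0 0 →
    ∃ q, Pt.Ok P c₀ q ∧ Rc p q ∧ Rc q Pt.d := by
  intro p hok h hd1 h00
  cases p with
  | a => simp [Rc] at h
  | b => simp [Rc] at h
  | g => simp [Rc] at h
  | d => simp [Rc] at h
  | g1 => simp [Rc] at h
  | g2 => simp [Rc] at h
  | d1 => exact absurd rfl hd1
  | d2 => exact ⟨.d1, ok_named P c₀ _ (by tauto), by simp [Rc], by simp [Rc]⟩
  | chain i j =>
    have hi : i ≤ 2 := hok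
    interval_cases i
    · -- chain 0 j with j ≥ 1 (j = 0 excluded)
      have hj : j ≠ 0 := by rintro rfl; exact h00 rfl
      exact ⟨.chain 0 0, by simp [Pt.Ok], Or.inl ⟨0, by omega, rfl⟩,
        rc_chain_tail 0 0 (by omega) _ (by simp [tail0])⟩
    · exact ⟨.d1, ok_named P c₀ _ (by tauto),
        Or.inr (by simp [ctail, tail1]), by simp [Rc]⟩
    · exact ⟨.d1, ok_named P c₀ _ (by tauto),
        Or.inr (by simp [ctail, tail2, tail1]), by simp [Rc]⟩
  | e t k l =>
    exact ⟨.d1, ok_named P c₀ _ (by tauto),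
      Or.inr (Or.inr (Or.inr (by simp [tail2, tail1]))), by simp [Rc]⟩

lemma seesg1_cases : ∀ p, Pt.Ok P c₀ p → Rc p Pt.g1 → p ≠ .chain 1 0 →
    p = .g2 ∨ (∃ q, Pt.Ok P c₀ q ∧ Rc p q ∧ Rc q Pt.g1) ∨
      (∃ q, Pt.Ok P c₀ q ∧ Rc p q ∧ (Rc q Pt.d1 ∨ Rc q (.chain 0 0))) := by
  intro p hok h h10
  cases p with
  | a => simp [Rc] at h
  | b => simp [Rc] at h
  | g => simp [Rc] at h
  | d => simp [Rc] at h
  | g1 => simp [Rc, tail1, tail0] at h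
  | g2 => exact Or.inl rfl
  | d1 => simp [Rc, tail0] at h
  | d2 => simp [Rc, tail0] at h
  | chain i j =>
    have hi : i ≤ 2 := hok
    refine Or.inr ?_
    interval_cases i
    · -- chain 0 j cannot see g1
      exfalso
      rcases h with ⟨j', _, hj⟩ | h
      · exact absurd hj (by simp)
      · simp [ctail, tail0] at h
    · -- chain 1 j, j ≥ 1
      have hj : j ≠ 0 := by rintro rfl; exact h10 rfl
      exact Or.inl ⟨.chain 1 0, by simp [Pt.Ok], Or.inl ⟨0, by omega, rfl⟩,
        Or.inr (by simp [ctail, tail1])⟩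
    · -- chain 2 j sees g2 which sees g1
      exact Or.inl ⟨.g2, ok_named P c₀ _ (by tauto),
        Or.inr (by simp [ctail, tail2]), by simp [Rc]⟩
  | e t k l =>
    -- e sees chain 1 k which sees d1
    exact Or.inr (Or.inr ⟨.chain 1 k, by simp [Pt.Ok],
      Or.inr (Or.inl ⟨k, le_refl k, rfl⟩),
      Or.inl (Or.inr (by simp [ctail, tail1]))⟩)

lemma pred10 : ∀ p, Pt.Ok P c₀ p → Rc p (.chain 1 0) →
    (∃ j, p = .chain 1 j) ∨ Rc p (.chain 0 0) := by
  intro p hok h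
  cases p with
  | a => simp [Rc] at h
  | b => simp [Rc] at h
  | g => simp [Rc] at h
  | d => simp [Rc] at h
  | g1 => simp [Rc, tail1, tail0] at h
  | g2 => simp [Rc] at h
  | d1 => simp [Rc, tail0] at h
  | d2 => simp [Rc] at h
  | chain i j =>
    rcases h with ⟨j', _, hj⟩ | h
    · obtain ⟨rfl, rfl⟩ : i = 1 ∧ j' = 0 := by
        constructor <;> [skip; skip] <;> cases hj
        all_goals rfl
      exact Or.inl ⟨j, rfl⟩
    · exfalso
      have hi : i ≤ 2 := hok
      interval_cases i <;> simp [ctail, tail0, tail1, tail2] at h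
  | e t k l =>
    exact Or.inr (Or.inl ⟨0, Nat.zero_le _, rfl⟩)

lemma seesb : ∀ p, Pt.Ok P c₀ p → p ≠ .a → p ≠ .b → Rc p Pt.b := by
  intro p hok ha hb
  cases p with
  | a => exact absurd rfl ha
  | b => exact absurd rfl hb
  | g => simp [Rc]
  | d => simp [Rc]
  | g1 => simp [Rc]
  | g2 => simp [Rc]
  | d1 => simp [Rc]
  | d2 => simp [Rc]
  | chain i j => exact rc_chain_tail i j hok _ (by simp [tail0])
  | e t k l => exact Or.inr (Or.inr (Or.inr (by simp [tail2, tail1, tail0])))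

lemma sat_top (y : FW P c₀) : sat (FR P c₀) V y MF.top := by simp [MF.top, sat]

lemma sat_fα_iff (x : FW P c₀) : sat (FR P c₀) V x MF.fα ↔ x.1 = Pt.a := by
  unfold MF.fα
  simp only [sat]
  constructor
  · rintro ⟨h1, h2⟩
    obtain ⟨y, hy, -⟩ := (sat_dia_iff P c₀ V x MF.top).mp h1
    by_contra ha
    have hb : x.1 ≠ Pt.b := by
      intro hxb; rw [hxb] at hy; simp [Rc] at hy
    have hrb : Rc x.1 Pt.b := seesb P c₀ _ x.2 ha hb
    have := h2 ⟨.b, ok_named P c₀ _ (by tauto)⟩ ((tg_iff _ _).mpr hrb)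
    obtain ⟨z, hz, -⟩ := (sat_dia_iff P c₀ V _ MF.top).mp this
    simp [Rc] at hz
  · intro hxa
    refine ⟨(sat_dia_iff P c₀ V x MF.top).mpr
      ⟨⟨.a, ok_named P c₀ _ (by tauto)⟩, by rw [hxa]; simp [Rc], sat_top P c₀ V _⟩, ?_⟩
    intro y hy
    rw [FR, tg_iff, hxa] at hy
    rw [Rc] at hy
    exact (sat_dia_iff P c₀ V y MF.top).mpr
      ⟨⟨.a, ok_named P c₀ _ (by tauto)⟩, by rw [hy]; simp [Rc], sat_top P c₀ V _⟩

lemma sat_fγ_iff (x : FW P c₀) : sat (FR P c₀) V x MF.fγ ↔ x.1 = Pt.g := by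
  have e : sat (FR P c₀) V x MF.fγ ↔ (sat (FR P c₀) V x (MF.dia MF.fα) ∧
      sat (FR P c₀) V x (MF.dia MF.fβ) ∧ ¬ sat (FR P c₀) V x (MF.dia (MF.dia MF.fβ))) := Iff.rfl
  rw [e]
  constructor
  · rintro ⟨h1, h2, h3⟩
    obtain ⟨ya, hya, ha⟩ := (sat_dia_iff P c₀ V x _).mp h1
    rw [sat_fα_iff] at ha
    obtain ⟨yb, hyb, hb⟩ := (sat_dia_iff P c₀ V x _).mp h2
    rw [sat_fβ_iff] at hb
    rw [hb] at hyb
    by_contra hg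
    have hd : x.1 ≠ Pt.d := by
      rintro hxd; rw [hxd] at hya; rw [Rc] at hya; rw [hya] at ha; simp at ha
    obtain ⟨q, hq, hxq, hqb⟩ := twostepb P c₀ _ x.2 hyb hg hd
    exact h3 ((sat_dia_iff P c₀ V x _).mpr ⟨⟨q, hq⟩, hxq, (sat_dia_iff P c₀ V _ _).mpr
      ⟨⟨.b, ok_named P c₀ _ (by tauto)⟩, hqb, (sat_fβ_iff P c₀ V _).mpr rfl⟩⟩)
  · intro hxg
    refine ⟨(sat_dia_iff P c₀ V x _).mpr ⟨⟨.a, ok_named P c₀ _ (by tauto)⟩,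
        by simp only [hxg]; simp [Rc], (sat_fα_iff P c₀ V _).mpr rfl⟩,
      (sat_dia_iff P c₀ V x _).mpr ⟨⟨.b, ok_named P c₀ _ (by tauto)⟩,
        by simp only [hxg]; simp [Rc], (sat_fβ_iff P c₀ V _).mpr rfl⟩, ?_⟩
    intro hcon
    obtain ⟨y, hxy, hy⟩ := (sat_dia_iff P c₀ V x _).mp hcon
    obtain ⟨z, hyz, hz⟩ := (sat_dia_iff P c₀ V _ _).mp hy
    rw [sat_fβ_iff] at hz
    rw [hxg] at hxy
    rw [Rc] at hxy
    rcases hxy with h|h <;> rw [h] at hyz <;> rw [Rc] at hyz <;> simp_all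

lemma sat_fδ_iff (x : FW P c₀) : sat (FR P c₀) V x MF.fδ ↔ x.1 = Pt.d := by
  have e : sat (FR P c₀) V x MF.fδ ↔ (¬ sat (FR P c₀) V x MF.fγ ∧
      sat (FR P c₀) V x (MF.dia MF.fβ) ∧ ¬ sat (FR P c₀) V x (MF.dia (MF.dia MF.fβ))) := Iff.rfl
  rw [e, sat_fγ_iff]
  constructor
  · rintro ⟨h1, h2, h3⟩
    obtain ⟨yb, hyb, hb⟩ := (sat_dia_iff P c₀ V x _).mp h2
    rw [sat_fβ_iff] at hb
    rw [hb] at hyb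
    by_contra hd
    obtain ⟨q, hq, hxq, hqb⟩ := twostepb P c₀ _ x.2 hyb h1 hd
    exact h3 ((sat_dia_iff P c₀ V x _).mpr ⟨⟨q, hq⟩, hxq, (sat_dia_iff P c₀ V _ _).mpr
      ⟨⟨.b, ok_named P c₀ _ (by tauto)⟩, hqb, (sat_fβ_iff P c₀ V _).mpr rfl⟩⟩)
  · intro hxd
    refine ⟨by simp only [hxd]; simp,
      (sat_dia_iff P c₀ V x _).mpr ⟨⟨.b, ok_named P c₀ _ (by tauto)⟩,
        by simp only [hxd]; simp [Rc], (sat_fβ_iff P c₀ V _).mpr rfl⟩, ?_⟩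
    intro hcon
    obtain ⟨y, hxy, hy⟩ := (sat_dia_iff P c₀ V x _).mp hcon
    obtain ⟨z, hyz, hz⟩ := (sat_dia_iff P c₀ V _ _).mp hy
    rw [sat_fβ_iff] at hz
    rw [hxd] at hxy
    rw [Rc] at hxy
    rw [hxy] at hyz
    rw [Rc] at hyz
    exact hyz

lemma sat_fγ₁_iff (x : FW P c₀) : sat (FR P c₀) V x MF.fγ₁ ↔ x.1 = Pt.g1 := by
  have e : sat (FR P c₀) V x MF.fγ₁ ↔ (sat (FR P c₀) V x (MF.dia MF.fγ) ∧
      ¬ sat (FR P c₀) V x (MF.dia (MF.dia MF.fγ)) ∧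
      ¬ sat (FR P c₀) V x (MF.dia MF.fδ)) := Iff.rfl
  rw [e]
  constructor
  · rintro ⟨h1, h2, h3⟩
    obtain ⟨y, hxy, hy⟩ := (sat_dia_iff P c₀ V x _).mp h1
    rw [sat_fγ_iff] at hy
    rw [hy] at hxy
    by_contra hg1
    rcases seesg_cases P c₀ _ x.2 hxy hg1 with ⟨q, hq, hxq, hqg⟩ | hxd
    · exact h2 ((sat_dia_iff P c₀ V x _).mpr ⟨⟨q, hq⟩, hxq, (sat_dia_iff P c₀ V _ _).mpr
        ⟨⟨.g, ok_named P c₀ _ (by tauto)⟩, hqg, (sat_fγ_iff P c₀ V _).mpr rfl⟩⟩)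
    · exact h3 ((sat_dia_iff P c₀ V x _).mpr
        ⟨⟨.d, ok_named P c₀ _ (by tauto)⟩, hxd, (sat_fδ_iff P c₀ V _).mpr rfl⟩)
  · intro hx
    refine ⟨(sat_dia_iff P c₀ V x _).mpr ⟨⟨.g, ok_named P c₀ _ (by tauto)⟩,
        by simp only [hx]; simp [Rc], (sat_fγ_iff P c₀ V _).mpr rfl⟩, ?_, ?_⟩
    · intro hcon
      obtain ⟨y, hxy, hy⟩ := (sat_dia_iff P c₀ V x _).mp hcon
      obtain ⟨z, hyz, hz⟩ := (sat_dia_iff P c₀ V _ _).mp hy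
      rw [sat_fγ_iff] at hz
      rw [hx] at hxy
      rw [Rc] at hxy
      rcases hxy with h|h|h <;> rw [h] at hyz <;> rw [Rc] at hyz <;> simp_all
    · intro hcon
      obtain ⟨y, hxy, hy⟩ := (sat_dia_iff P c₀ V x _).mp hcon
      rw [sat_fδ_iff] at hy
      rw [hx] at hxy
      rw [Rc] at hxy
      rw [hy] at hxy
      simp at hxy

lemma sat_fδ₁_iff (x : FW P c₀) :
    sat (FR P c₀) V x MF.fδ₁ ↔ x.1 = Pt.d1 ∨ x.1 = Pt.chain 0 0 := by
  have e : sat (FR P c₀) V x MF.fδ₁ ↔ (sat (FR P c₀) V x (MF.dia MF.fδ) ∧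
      ¬ sat (FR P c₀) V x (MF.dia (MF.dia MF.fδ))) := Iff.rfl
  rw [e]
  constructor
  · rintro ⟨h1, h2⟩
    obtain ⟨y, hxy, hy⟩ := (sat_dia_iff P c₀ V x _).mp h1
    rw [sat_fδ_iff] at hy
    rw [hy] at hxy
    by_contra hx
    push_neg at hx
    obtain ⟨q, hq, hxq, hqd⟩ := seesd_cases P c₀ _ x.2 hxy hx.1 hx.2
    exact h2 ((sat_dia_iff P c₀ V x _).mpr ⟨⟨q, hq⟩, hxq, (sat_dia_iff P c₀ V _ _).mpr
      ⟨⟨.d, ok_named P c₀ _ (by tauto)⟩, hqd, (sat_fδ_iff P c₀ V _).mpr rfl⟩⟩)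
  · intro hx
    have hsucc : ∀ y : Pt, Rc x.1 y → tail0 y := by
      intro y hy
      rcases hx with h|h <;> rw [h] at hy
      · rw [Rc] at hy
        rcases hy with rfl|rfl <;> simp [tail0]
      · rcases hy with ⟨j', hj', _⟩ | hy
        · omega
        · exact hy
    have hxd : Rc x.1 Pt.d := by
      rcases hx with h|h <;> simp only [h]
      · simp [Rc]
      · exact rc_chain_tail 0 0 (by omega) _ (by simp [tail0])
    refine ⟨(sat_dia_iff P c₀ V x _).mpr
      ⟨⟨.d, ok_named P c₀ _ (by tauto)⟩, hxd, (sat_fδ_iff P c₀ V _).mpr rfl⟩, ?_⟩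
    intro hcon
    obtain ⟨y, hxy, hy⟩ := (sat_dia_iff P c₀ V x _).mp hcon
    obtain ⟨z, hyz, hz⟩ := (sat_dia_iff P c₀ V _ _).mp hy
    rw [sat_fδ_iff] at hz
    have := hsucc _ hxy
    rcases this with h|h|h|h <;> rw [h] at hyz <;> rw [Rc] at hyz <;> simp_all

lemma sat_α1_iff (x : FW P c₀) : sat (FR P c₀) V x (MF.α₀ 1) ↔ x.1 = Pt.chain 1 0 := by
  have e : sat (FR P c₀) V x (MF.α₀ 1) ↔ (sat (FR P c₀) V x (MF.dia MF.fγ₁) ∧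
      sat (FR P c₀) V x (MF.dia MF.fδ₁) ∧
      ¬ sat (FR P c₀) V x (MF.dia (MF.dia MF.fγ₁)) ∧
      ¬ sat (FR P c₀) V x (MF.dia (MF.dia MF.fδ₁))) := Iff.rfl
  rw [e]
  constructor
  · rintro ⟨h1, h2, h3, h4⟩
    obtain ⟨y, hxy, hy⟩ := (sat_dia_iff P c₀ V x _).mp h1
    rw [sat_fγ₁_iff] at hy
    rw [hy] at hxy
    by_contra hx10
    rcases seesg1_cases P c₀ _ x.2 hxy hx10 with hg2 | ⟨q, hq, hxq, hqg⟩ | ⟨q, hq, hxq, hqd⟩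
    · obtain ⟨z, hxz, hz⟩ := (sat_dia_iff P c₀ V x _).mp h2
      rw [sat_fδ₁_iff] at hz
      rw [hg2] at hxz
      rw [Rc] at hxz
      rcases hz with h|h <;> rcases hxz with h'|h'|h'|h' <;> simp_all
    · exact h3 ((sat_dia_iff P c₀ V x _).mpr ⟨⟨q, hq⟩, hxq, (sat_dia_iff P c₀ V _ _).mpr
        ⟨⟨.g1, ok_named P c₀ _ (by tauto)⟩, hqg, (sat_fγ₁_iff P c₀ V _).mpr rfl⟩⟩)
    · refine h4 ((sat_dia_iff P c₀ V x _).mpr ⟨⟨q, hq⟩, hxq, (sat_dia_iff P c₀ V _ _).mpr ?_⟩)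
      rcases hqd with h|h
      · exact ⟨⟨.d1, ok_named P c₀ _ (by tauto)⟩, h, (sat_fδ₁_iff P c₀ V _).mpr (Or.inl rfl)⟩
      · exact ⟨⟨.chain 0 0, by simp [Pt.Ok]⟩, h, (sat_fδ₁_iff P c₀ V _).mpr (Or.inr rfl)⟩
  · intro hx
    have hsucc : ∀ y : Pt, Rc x.1 y → tail1 y := by
      intro y hy
      rw [hx] at hy
      rcases hy with ⟨j', hj', _⟩ | hy
      · omega
      · exact hy
    have hg1 : Rc x.1 Pt.g1 := by simp only [hx]; exact Or.inr (by simp [ctail, tail1])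
    have hd1 : Rc x.1 Pt.d1 := by simp only [hx]; exact Or.inr (by simp [ctail, tail1])
    refine ⟨(sat_dia_iff P c₀ V x _).mpr ⟨⟨.g1, ok_named P c₀ _ (by tauto)⟩, hg1,
        (sat_fγ₁_iff P c₀ V _).mpr rfl⟩,
      (sat_dia_iff P c₀ V x _).mpr ⟨⟨.d1, ok_named P c₀ _ (by tauto)⟩, hd1,
        (sat_fδ₁_iff P c₀ V _).mpr (Or.inl rfl)⟩, ?_, ?_⟩
    · intro hcon
      obtain ⟨y, hxy, hy⟩ := (sat_dia_iff P c₀ V x _).mp hcon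
      obtain ⟨z, hyz, hz⟩ := (sat_dia_iff P c₀ V _ _).mp hy
      rw [sat_fγ₁_iff] at hz
      have := hsucc _ hxy
      rcases this with h|h|h|h|h|h <;> rw [h] at hyz <;> rw [Rc] at hyz <;> simp_all
    · intro hcon
      obtain ⟨y, hxy, hy⟩ := (sat_dia_iff P c₀ V x _).mp hcon
      obtain ⟨z, hyz, hz⟩ := (sat_dia_iff P c₀ V _ _).mp hy
      rw [sat_fδ₁_iff] at hz
      have := hsucc _ hxy
      rcases hz with hz|hz <;> rcases this with h|h|h|h|h|h <;> rw [h] at hyz <;>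
        rw [Rc] at hyz <;> simp_all

lemma sat_α0_at (h00 : Pt.Ok P c₀ (.chain 0 0)) :
    sat (FR P c₀) V ⟨.chain 0 0, h00⟩ (MF.α₀ 0) := by
  have e : sat (FR P c₀) V ⟨.chain 0 0, h00⟩ (MF.α₀ 0) ↔
      (sat (FR P c₀) V ⟨.chain 0 0, h00⟩ (MF.dia MF.fγ) ∧
      sat (FR P c₀) V ⟨.chain 0 0, h00⟩ (MF.dia MF.fδ) ∧
      ¬ sat (FR P c₀) V ⟨.chain 0 0, h00⟩ (MF.dia (MF.dia MF.fγ)) ∧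
      ¬ sat (FR P c₀) V ⟨.chain 0 0, h00⟩ (MF.dia (MF.dia MF.fδ))) := Iff.rfl
  rw [e]
  have hsucc : ∀ y : Pt, Rc (Pt.chain 0 0) y → tail0 y := by
    intro y hy
    rcases hy with ⟨j', hj', _⟩ | hy
    · omega
    · exact hy
  refine ⟨(sat_dia_iff P c₀ V _ _).mpr ⟨⟨.g, ok_named P c₀ _ (by tauto)⟩,
      rc_chain_tail 0 0 (by omega) _ (by simp [tail0]), (sat_fγ_iff P c₀ V _).mpr rfl⟩,
    (sat_dia_iff P c₀ V _ _).mpr ⟨⟨.d, ok_named P c₀ _ (by tauto)⟩,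
      rc_chain_tail 0 0 (by omega) _ (by simp [tail0]), (sat_fδ_iff P c₀ V _).mpr rfl⟩, ?_, ?_⟩
  · intro hcon
    obtain ⟨y, hxy, hy⟩ := (sat_dia_iff P c₀ V _ _).mp hcon
    obtain ⟨z, hyz, hz⟩ := (sat_dia_iff P c₀ V _ _).mp hy
    rw [sat_fγ_iff] at hz
    have := hsucc _ hxy
    rcases this with h|h|h|h <;> rw [h] at hyz <;> rw [Rc] at hyz <;> simp_all
  · intro hcon
    obtain ⟨y, hxy, hy⟩ := (sat_dia_iff P c₀ V _ _).mp hcon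
    obtain ⟨z, hyz, hz⟩ := (sat_dia_iff P c₀ V _ _).mp hy
    rw [sat_fδ_iff] at hz
    have := hsucc _ hxy
    rcases this with h|h|h|h <;> rw [h] at hyz <;> rw [Rc] at hyz <;> simp_all
end Model
end Aux

/-- in 𝔉, under any valuation, π₁ holds at no more than one point,
and any such point is of the form a^1_j. -/
theorem pi1_at_most_one :
    ∀ (P : List Instr) (c₀ : Config), Deterministic P →
      ∀ (V : Nat → FW P c₀ → Prop),
        (∀ x y : FW P c₀, sat (FR P c₀) V x MF.π₁ → sat (FR P c₀) V y MF.π₁ → x = y) ∧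
        (∀ x : FW P c₀, sat (FR P c₀) V x MF.π₁ → ∃ j, x.1 = Pt.chain 1 j) := by
  intro P c₀ _ V
  have hpi : ∀ x : FW P c₀, sat (FR P c₀) V x MF.π₁ →
      (∃ j, x.1 = Pt.chain 1 j) ∧ V 0 x ∧ (∀ z : FW P c₀, Rc x.1 z.1 → ¬ V 0 z) := by
    intro x hx
    have e : sat (FR P c₀) V x MF.π₁ ↔
        (¬(¬ sat (FR P c₀) V x (MF.dia (MF.α₀ 1)) ∧ ¬ sat (FR P c₀) V x (MF.α₀ 1)) ∧
        ¬ sat (FR P c₀) V x (MF.dia (MF.α₀ 0)) ∧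
        ¬ sat (FR P c₀) V x (MF.dia (MF.α₀ 2)) ∧
        V 0 x ∧
        ¬ sat (FR P c₀) V x (MF.dia (MF.var 0))) := Iff.rfl
    rw [e] at hx
    obtain ⟨h1, h2, _, hv, hnv⟩ := hx
    have hchain : ∃ j, x.1 = Pt.chain 1 j := by
      rcases Classical.em (sat (FR P c₀) V x (MF.α₀ 1)) with h | h
      · exact ⟨0, (sat_α1_iff P c₀ V x).mp h⟩
      · have hdia : sat (FR P c₀) V x (MF.dia (MF.α₀ 1)) := by tauto
        obtain ⟨y, hxy, hy⟩ := (sat_dia_iff P c₀ V x _).mp hdia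
        rw [sat_α1_iff] at hy
        rw [hy] at hxy
        rcases pred10 P c₀ _ x.2 hxy with ⟨j, hj⟩ | h00
        · exact ⟨j, hj⟩
        · exact absurd ((sat_dia_iff P c₀ V x _).mpr
            ⟨⟨.chain 0 0, by simp [Pt.Ok]⟩, h00, sat_α0_at P c₀ V _⟩) h2
    refine ⟨hchain, hv, ?_⟩
    intro z hz hvz
    exact hnv ((sat_dia_iff P c₀ V x (MF.var 0)).mpr ⟨z, hz, hvz⟩)
  constructor
  · intro x y hx hy
    obtain ⟨⟨j, hj⟩, hvx, hnx⟩ := hpi x hx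
    obtain ⟨⟨j', hj'⟩, hvy, hny⟩ := hpi y hy
    rcases lt_trichotomy j j' with h|h|h
    · exact absurd hvx (hny x (by rw [hj, hj']; exact Or.inl ⟨j, h, rfl⟩))
    · exact Subtype.ext (by rw [hj, hj', h])
    · exact absurd hvy (hnx y (by rw [hj, hj']; exact Or.inl ⟨j', h, rfl⟩))
  · intro x hx
    exact (hpi x hx).1
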